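/- For a unitary U on an n-dimensional Hilbert space and a density matrix ρ with eigenvalue vector λ (ascending order λ↑, descending order λ↓), the trace distance satisfies T(ρ, UρU†) ≤ ½ Σᵢ |λᵢ↑ − λᵢ↓|. -/

import Mathlib

open Matrix Kronecker
open scoped ComplexOrder

/-- Trace distance `T(ρ,σ) = ½ Tr √((ρ−σ)†(ρ−σ))`. -/
noncomputable def traceDist {n : ℕ} (ρ σ : Matrix (Fin n) (Fin n) ℂ) : ℝ :=
  (1/2) * ((Matrix.posSemidef_conjTranspose_mul_self (ρ - σ)).1.eigenvectorUnitary.1 *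
    Matrix.diagonal ((fun x : ℝ => (x : ℂ)) ∘ (√·) ∘ (Matrix.posSemidef_conjTranspose_mul_self (ρ - σ)).1.eigenvalues) *
    (star (Matrix.posSemidef_conjTranspose_mul_self (ρ - σ)).1.eigenvectorUnitary :
      Matrix (Fin n) (Fin n) ℂ)).trace.re

open scoped MatrixOrder in
lemma frozen_sqrt_eq {n : ℕ} (Y S : Matrix (Fin n) (Fin n) ℂ) (hS : S.PosSemidef)
    (hsq : S ^ 2 = Yᴴ * Y) :
    (Matrix.posSemidef_conjTranspose_mul_self Y).1.eigenvectorUnitary.1 *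
    Matrix.diagonal ((fun x : ℝ => (x : ℂ)) ∘ (√·) ∘ (Matrix.posSemidef_conjTranspose_mul_self Y).1.eigenvalues) *
    (star (Matrix.posSemidef_conjTranspose_mul_self Y).1.eigenvectorUnitary :
      Matrix (Fin n) (Fin n) ℂ) = S := by
  have hA := Matrix.posSemidef_conjTranspose_mul_self Y
  have h1 : CFC.sqrt (Yᴴ * Y) = S :=
    (CFC.sqrt_eq_iff _ _ hA.nonneg hS.nonneg).2 (by rw [← hsq, pow_two])
  rw [← h1, CFC.sqrt_eq_cfc, cfc_nnreal_eq_real _ (Yᴴ * Y), hA.1.cfc_eq]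
  simp [IsHermitian.cfc]
  refine congrArg (· * _) (congrArg (_ * ·) (congrArg diagonal (funext fun i => ?_)))
  simp [hA.eigenvalues_nonneg i]

open Matrix in
-- Ky Fan rearrangement auxiliary (real)
lemma kyfan_aux {n : ℕ} (d : Fin n → ℝ) (hd : Antitone d)
    (t : Fin n → ℝ) (ht0 : ∀ i, 0 ≤ t i) (ht1 : ∀ i, t i ≤ 1)
    (k : ℕ) (hk : k ≤ n) (hsum : ∑ i, t i = k) :
    ∑ i, d i * t i ≤ ∑ i ∈ Finset.univ.filter (fun i : Fin n => (i : ℕ) < k), d i := by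
  rcases Nat.eq_zero_or_pos k with h0 | hpos
  · subst h0
    have hz : ∀ i ∈ Finset.univ, t i = 0 := by
      intro i _
      have := (Finset.sum_eq_zero_iff_of_nonneg (fun i _ => ht0 i)).1 (by simpa using hsum)
      exact this i (Finset.mem_univ i)
    have : ∀ i ∈ (Finset.univ : Finset (Fin n)), d i * t i = 0 := by
      intro i hi; rw [hz i hi, mul_zero]
    rw [Finset.sum_congr rfl this]
    simp
  · have hn : 0 < n := lt_of_lt_of_le hpos hk
    set i0 : Fin n := ⟨k - 1, by omega⟩ with hi0
    set t0 : ℝ := d i0 with ht0def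
    have hSeq : Finset.univ.filter (fun i : Fin n => (i : ℕ) < k) = Finset.Iic i0 := by
      ext i
      simp [Finset.mem_Iic, Fin.le_def, hi0]
      omega
    have hcard : (Finset.univ.filter (fun i : Fin n => (i : ℕ) < k)).card = k := by
      rw [hSeq, Fin.card_Iic, hi0]
      simp
      omega
    have key : ∀ i : Fin n,
        d i * t i - (if (i : ℕ) < k then d i else 0)
          ≤ t0 * (t i - (if (i : ℕ) < k then 1 else 0)) := by
      intro i
      by_cases hik : (i : ℕ) < k
      · have hle : i0 ≤ i ∨ i ≤ i0 := le_total i0 i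
        have h1 : t0 ≤ d i := hd (by rw [Fin.le_def]; simp [hi0]; omega)
        have h2 : t i ≤ 1 := ht1 i
        simp only [if_pos hik]
        nlinarith
      · have h1 : d i ≤ t0 := hd (by rw [Fin.le_def]; simp [hi0]; omega)
        have h2 : 0 ≤ t i := ht0 i
        simp only [if_neg hik]
        nlinarith
    have hsumkey := Finset.sum_le_sum (fun i (_ : i ∈ Finset.univ) => key i)
    have e1 : ∑ i : Fin n, (d i * t i - (if (i : ℕ) < k then d i else 0))
        = ∑ i, d i * t i - ∑ i ∈ Finset.univ.filter (fun i : Fin n => (i : ℕ) < k), d i := by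
      rw [Finset.sum_sub_distrib, Finset.sum_filter]
    have e2 : ∑ i : Fin n, t0 * (t i - (if (i : ℕ) < k then 1 else 0)) = 0 := by
      rw [← Finset.mul_sum, Finset.sum_sub_distrib, hsum]
      have : ∑ i : Fin n, (if (i : ℕ) < k then (1:ℝ) else 0) = k := by
        rw [Finset.sum_boole, hcard]
      rw [this, sub_self, mul_zero]
    rw [e1, e2] at hsumkey
    linarith

open Matrix in
lemma trace_unitary_conj {n : ℕ} (u A : Matrix (Fin n) (Fin n) ℂ)
    (hu : uᴴ * u = 1) : (u * A * uᴴ).trace = A.trace := by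
  rw [Matrix.trace_mul_cycle, hu, Matrix.one_mul]

lemma trace_P_conj {n : ℕ} (u w : Matrix (Fin n) (Fin n) ℂ)
    (hu : uᴴ * u = 1) (hu' : u * uᴴ = 1) (hw : wᴴ * w = 1) (hw' : w * wᴴ = 1)
    (c μ : Fin n → ℝ) (hc0 : ∀ i, 0 ≤ c i) (hc1 : ∀ i, c i ≤ 1) :
    ∃ t : Fin n → ℝ, (∀ j, 0 ≤ t j) ∧ (∀ j, t j ≤ 1) ∧ (∑ j, t j = ∑ i, c i) ∧
      ((u * Matrix.diagonal (fun i => (c i : ℂ)) * uᴴ) *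
       (w * Matrix.diagonal (fun i => (μ i : ℂ)) * wᴴ)).trace =
      ((∑ j, μ j * t j : ℝ) : ℂ) := by
  set N : Matrix (Fin n) (Fin n) ℂ := uᴴ * w with hN
  have hNc : Nᴴ = wᴴ * u := by
    rw [hN, Matrix.conjTranspose_mul, Matrix.conjTranspose_conjTranspose]
  have hNN : Nᴴ * N = 1 := by
    rw [hNc, hN, Matrix.mul_assoc, ← Matrix.mul_assoc u uᴴ w, hu', Matrix.one_mul, hw]
  have hNN' : N * Nᴴ = 1 := by
    rw [hNc, hN, Matrix.mul_assoc, ← Matrix.mul_assoc w wᴴ u, hw', Matrix.one_mul, hu]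
  -- column sums
  have hcol : ∀ j, ∑ i, Complex.normSq (N i j) = 1 := by
    intro j
    have h1 : (Nᴴ * N) j j = 1 := by rw [hNN]; simp
    rw [Matrix.mul_apply] at h1
    simp only [Matrix.conjTranspose_apply] at h1
    have h2 : ∑ i, (starRingEnd ℂ) (N i j) * N i j = 1 := h1
    have h3 : ∑ i, ((Complex.normSq (N i j) : ℝ) : ℂ) = 1 := by
      rw [← h2]
      refine Finset.sum_congr rfl fun i _ => ?_
      exact Complex.normSq_eq_conj_mul_self
    have := congrArg Complex.re h3
    simpa [Complex.re_sum] using this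
  have hrow : ∀ i, ∑ j, Complex.normSq (N i j) = 1 := by
    intro i
    have h1 : (N * Nᴴ) i i = 1 := by rw [hNN']; simp
    rw [Matrix.mul_apply] at h1
    simp only [Matrix.conjTranspose_apply] at h1
    have h3 : ∑ j, ((Complex.normSq (N i j) : ℝ) : ℂ) = 1 := by
      rw [← h1]
      refine Finset.sum_congr rfl fun j _ => ?_
      exact (Complex.mul_conj _).symm
    have := congrArg Complex.re h3
    simpa [Complex.re_sum] using this
  refine ⟨fun j => ∑ i, c i * Complex.normSq (N i j), ?_, ?_, ?_, ?_⟩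
  · intro j
    exact Finset.sum_nonneg fun i _ => mul_nonneg (hc0 i) (Complex.normSq_nonneg _)
  · intro j
    calc ∑ i, c i * Complex.normSq (N i j)
        ≤ ∑ i, Complex.normSq (N i j) :=
          Finset.sum_le_sum fun i _ => by
            nlinarith [Complex.normSq_nonneg (N i j), hc1 i, hc0 i]
      _ = 1 := hcol j
  · rw [Finset.sum_comm]
    refine Finset.sum_congr rfl fun i _ => ?_
    rw [← Finset.mul_sum, hrow i, mul_one]
  · -- trace computation
    have hmat : (u * Matrix.diagonal (fun i => (c i : ℂ)) * uᴴ) *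
        (w * Matrix.diagonal (fun i => (μ i : ℂ)) * wᴴ)
        = u * (Matrix.diagonal (fun i => (c i : ℂ)) * N *
            Matrix.diagonal (fun i => (μ i : ℂ)) * Nᴴ) * uᴴ := by
      rw [hNc, hN]
      simp only [Matrix.mul_assoc]
      rw [hu', Matrix.mul_one]
    have hentry : ∀ i j, (Matrix.diagonal (fun i => (c i : ℂ)) * N *
        Matrix.diagonal (fun i => (μ i : ℂ))) i j = (c i : ℂ) * N i j * (μ j : ℂ) := by
      intro i j
      rw [Matrix.mul_diagonal, Matrix.diagonal_mul]
    have hdiag : ∀ i, ((Matrix.diagonal (fun i => (c i : ℂ)) * N *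
        Matrix.diagonal (fun i => (μ i : ℂ))) * Nᴴ).diag i
        = ∑ j, (c i : ℂ) * N i j * (μ j : ℂ) * (starRingEnd ℂ) (N i j) := by
      intro i
      rw [Matrix.diag_apply, Matrix.mul_apply]
      refine Finset.sum_congr rfl fun j _ => ?_
      rw [hentry, Matrix.conjTranspose_apply]
      rfl
    rw [hmat, trace_unitary_conj _ _ hu, Matrix.trace]
    push_cast
    rw [Finset.sum_congr rfl fun i _ => hdiag i, Finset.sum_comm]
    refine Finset.sum_congr rfl fun j _ => ?_
    rw [Finset.mul_sum]
    refine Finset.sum_congr rfl fun i _ => ?_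
    linear_combination ((μ j : ℂ) * (c i : ℂ)) * Complex.mul_conj (N i j)

lemma conj_mul_conj {n : ℕ} (u A B : Matrix (Fin n) (Fin n) ℂ) (hu : uᴴ * u = 1) :
    (u * A * uᴴ) * (u * B * uᴴ) = u * (A * B) * uᴴ := by
  simp only [Matrix.mul_assoc]
  rw [← Matrix.mul_assoc uᴴ u, hu, Matrix.one_mul]

/-- For a unitary U and a density matrix ρ,
T(ρ, UρU†) ≤ ½ Σᵢ |λᵢ↑ − λᵢ↓|. -/
theorem stmt_2 {n : ℕ} (ρ : Matrix (Fin n) (Fin n) ℂ)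
    (hρ : ρ.PosSemidef) (hρt : ρ.trace = 1)
    (U : Matrix (Fin n) (Fin n) ℂ) (hU : U ∈ Matrix.unitaryGroup (Fin n) ℂ)
    (lamAsc lamDesc : Fin n → ℝ)
    (hAsc : Monotone lamAsc) (hDesc : Antitone lamDesc)
    (hAsc' : ∃ e : Equiv.Perm (Fin n), lamAsc = hρ.1.eigenvalues ∘ e)
    (hDesc' : ∃ e : Equiv.Perm (Fin n), lamDesc = hρ.1.eigenvalues ∘ e) :
    traceDist ρ (U * ρ * Uᴴ) ≤ (1/2) * ∑ i, |lamAsc i - lamDesc i| := by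
  classical
  obtain ⟨ea, hea⟩ := hAsc'
  obtain ⟨ed, hed⟩ := hDesc'
  have hU1 : Uᴴ * U = 1 := by
    have := Matrix.mem_unitaryGroup_iff'.mp hU
    simpa [Matrix.star_eq_conjTranspose] using this
  have hU2 : U * Uᴴ = 1 := by
    have := Matrix.mem_unitaryGroup_iff.mp hU
    simpa [Matrix.star_eq_conjTranspose] using this
  set σ : Matrix (Fin n) (Fin n) ℂ := U * ρ * Uᴴ with hσdef
  have hσherm : σ.IsHermitian := by
    show σᴴ = σ
    rw [hσdef]
    simp [Matrix.conjTranspose_mul, Matrix.mul_assoc, hρ.1.eq]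
  set X : Matrix (Fin n) (Fin n) ℂ := ρ - σ with hXdef
  have hX : X.IsHermitian := hρ.1.sub hσherm
  set lam : Fin n → ℝ := hX.eigenvalues with hlamdef
  set u : Matrix (Fin n) (Fin n) ℂ := (hX.eigenvectorUnitary : Matrix (Fin n) (Fin n) ℂ)
    with hudef
  have hu : uᴴ * u = 1 := by
    have := hX.eigenvectorUnitary.2
    rw [Unitary.mem_iff] at this
    simpa [Matrix.star_eq_conjTranspose] using this.1
  have hu' : u * uᴴ = 1 := by
    have := hX.eigenvectorUnitary.2
    rw [Unitary.mem_iff] at this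
    simpa [Matrix.star_eq_conjTranspose] using this.2
  have hspec : X = u * Matrix.diagonal (fun i => (lam i : ℂ)) * uᴴ := by
    have h := hX.spectral_theorem
    simpa [Matrix.star_eq_conjTranspose, Function.comp_def] using h
  -- the square root of XᴴX
  set S : Matrix (Fin n) (Fin n) ℂ := u * Matrix.diagonal (fun i => ((|lam i| : ℝ) : ℂ)) * uᴴ
    with hSdef
  have hSpsd : S.PosSemidef := by
    refine Matrix.PosSemidef.mul_mul_conjTranspose_same ?_ u
    refine Matrix.posSemidef_diagonal_iff.mpr fun i => ?_
    rw [Complex.zero_le_real]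
    exact abs_nonneg _
  have hsq : S ^ 2 = Xᴴ * X := by
    rw [pow_two, hSdef, conj_mul_conj _ _ _ hu, Matrix.diagonal_mul_diagonal,
      hX.eq, hspec, conj_mul_conj _ _ _ hu, Matrix.diagonal_mul_diagonal]
    have habs : (fun i => ((|lam i| : ℝ) : ℂ) * ((|lam i| : ℝ) : ℂ))
        = fun i => (lam i : ℂ) * (lam i : ℂ) := by
      funext i
      rw [← Complex.ofReal_mul, ← Complex.ofReal_mul, abs_mul_abs_self]
    rw [habs]
  have hsqrt_eq : S = (Matrix.posSemidef_conjTranspose_mul_self X).1.eigenvectorUnitary.1 *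
      Matrix.diagonal ((fun x : ℝ => (x : ℂ)) ∘ (√·) ∘ (Matrix.posSemidef_conjTranspose_mul_self X).1.eigenvalues) *
      (star (Matrix.posSemidef_conjTranspose_mul_self X).1.eigenvectorUnitary :
        Matrix (Fin n) (Fin n) ℂ) :=
    (frozen_sqrt_eq X S hSpsd hsq).symm
  have htrS : ((Matrix.posSemidef_conjTranspose_mul_self X).1.eigenvectorUnitary.1 *
      Matrix.diagonal ((fun x : ℝ => (x : ℂ)) ∘ (√·) ∘ (Matrix.posSemidef_conjTranspose_mul_self X).1.eigenvalues) *
      (star (Matrix.posSemidef_conjTranspose_mul_self X).1.eigenvectorUnitary :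
        Matrix (Fin n) (Fin n) ℂ)).trace.re
      = ∑ i, |lam i| := by
    rw [← hsqrt_eq, hSdef, trace_unitary_conj _ _ hu, Matrix.trace_diagonal,
      Complex.re_sum]
    simp
  -- trace of X is zero
  have hσtr : σ.trace = 1 := by
    rw [hσdef, trace_unitary_conj _ _ hU1, hρt]
  have hlamsum : ∑ i, lam i = 0 := by
    have h1 : X.trace = ((∑ i, lam i : ℝ) : ℂ) := by
      rw [hspec, trace_unitary_conj _ _ hu, Matrix.trace_diagonal]
      push_cast
      rfl
    have h2 : X.trace = 0 := by
      rw [hXdef, Matrix.trace_sub, hρt, hσtr, sub_self]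
    rw [h2] at h1
    exact_mod_cast h1.symm
  -- the projector data
  set c : Fin n → ℝ := fun i => if 0 < lam i then 1 else 0 with hcdef
  set k : ℕ := (Finset.univ.filter fun i => 0 < lam i).card with hkdef
  have hc0 : ∀ i, 0 ≤ c i := fun i => by by_cases h : 0 < lam i <;> simp [hcdef, h]
  have hc1 : ∀ i, c i ≤ 1 := fun i => by by_cases h : 0 < lam i <;> simp [hcdef, h]
  have hck : ∑ i, c i = (k : ℝ) := by
    rw [hcdef, hkdef]
    simp [Finset.sum_boole]
  have hkle : k ≤ n := by
    calc k ≤ (Finset.univ : Finset (Fin n)).card := Finset.card_filter_le _ _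
    _ = n := by simp
  have hclam : ∀ i, c i * lam i = max (lam i) 0 := by
    intro i
    by_cases h : 0 < lam i
    · simp [hcdef, h, max_eq_left h.le]
    · push_neg at h
      simp [hcdef, max_eq_right h, not_lt.mpr h]
  -- trace of P * X
  set P : Matrix (Fin n) (Fin n) ℂ := u * Matrix.diagonal (fun i => (c i : ℂ)) * uᴴ
    with hPdef
  have hPX : (P * X).trace = ((∑ i, max (lam i) 0 : ℝ) : ℂ) := by
    rw [hspec, hPdef, conj_mul_conj _ _ _ hu, Matrix.diagonal_mul_diagonal,
      trace_unitary_conj _ _ hu, Matrix.trace_diagonal]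
    push_cast
    refine Finset.sum_congr rfl fun i _ => ?_
    rw [← Complex.ofReal_mul, hclam i]
  -- spectral decomposition of ρ and σ
  set μ : Fin n → ℝ := hρ.1.eigenvalues with hμdef
  set v : Matrix (Fin n) (Fin n) ℂ := (hρ.1.eigenvectorUnitary : Matrix (Fin n) (Fin n) ℂ)
    with hvdef
  have hv : vᴴ * v = 1 := by
    have := hρ.1.eigenvectorUnitary.2
    rw [Unitary.mem_iff] at this
    simpa [Matrix.star_eq_conjTranspose] using this.1
  have hv' : v * vᴴ = 1 := by
    have := hρ.1.eigenvectorUnitary.2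
    rw [Unitary.mem_iff] at this
    simpa [Matrix.star_eq_conjTranspose] using this.2
  have hρspec : ρ = v * Matrix.diagonal (fun i => (μ i : ℂ)) * vᴴ := by
    have h := hρ.1.spectral_theorem
    simpa [Matrix.star_eq_conjTranspose, Function.comp_def] using h
  set w : Matrix (Fin n) (Fin n) ℂ := U * v with hwdef
  have hw : wᴴ * w = 1 := by
    rw [hwdef, Matrix.conjTranspose_mul, Matrix.mul_assoc,
      ← Matrix.mul_assoc Uᴴ U v, hU1, Matrix.one_mul, hv]
  have hw' : w * wᴴ = 1 := by
    rw [hwdef, Matrix.conjTranspose_mul, Matrix.mul_assoc,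
      ← Matrix.mul_assoc v vᴴ Uᴴ, hv', Matrix.one_mul, hU2]
  have hσspec : σ = w * Matrix.diagonal (fun i => (μ i : ℂ)) * wᴴ := by
    rw [hσdef, hρspec, hwdef, Matrix.conjTranspose_mul]
    simp only [Matrix.mul_assoc]
  -- Ky Fan numerics
  obtain ⟨t1, ht1a, ht1b, ht1c, ht1d⟩ := trace_P_conj u v hu hu' hv hv' c μ hc0 hc1
  obtain ⟨t2, ht2a, ht2b, ht2c, ht2d⟩ := trace_P_conj u w hu hu' hw hw' c μ hc0 hc1
  set a : ℝ := ∑ j, μ j * t1 j with hadef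
  set b : ℝ := ∑ j, μ j * t2 j with hbdef
  have hPρ : (P * ρ).trace = ((a : ℝ) : ℂ) := by rw [hρspec, hPdef]; exact ht1d
  have hPσ : (P * σ).trace = ((b : ℝ) : ℂ) := by rw [hσspec, hPdef]; exact ht2d
  have hab : ∑ i, max (lam i) 0 = a - b := by
    have h1 : (P * X).trace = ((a - b : ℝ) : ℂ) := by
      rw [hXdef, Matrix.mul_sub, Matrix.trace_sub, hPρ, hPσ]
      push_cast
      ring
    rw [hPX] at h1
    exact_mod_cast h1
  -- bound a from above
  have hSset := Finset.univ.filter (fun i : Fin n => (i : ℕ) < k)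
  have hμd : ∀ j, μ j = lamDesc (ed.symm j) := by
    intro j
    rw [hed]
    simp
  have hμa : ∀ j, μ j = lamAsc (ea.symm j) := by
    intro j
    rw [hea]
    simp
  have ha_bd : a ≤ ∑ i ∈ Finset.univ.filter (fun i : Fin n => (i : ℕ) < k), lamDesc i := by
    have h1 : a = ∑ i, lamDesc i * t1 (ed i) := by
      rw [hadef]
      rw [← Equiv.sum_comp ed (fun j => μ j * t1 j)]
      refine Finset.sum_congr rfl fun i _ => ?_
      rw [hμd (ed i), Equiv.symm_apply_apply]
    rw [h1]
    refine kyfan_aux lamDesc hDesc (fun i => t1 (ed i)) (fun i => ht1a _) (fun i => ht1b _)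
      k hkle ?_
    rw [Equiv.sum_comp ed t1, ht1c, hck]
  have hb_bd : ∑ i ∈ Finset.univ.filter (fun i : Fin n => (i : ℕ) < k), lamAsc i ≤ b := by
    have h1 : -b = ∑ i, (fun i => -lamAsc i) i * t2 (ea i) := by
      rw [hbdef, ← Finset.sum_neg_distrib]
      rw [← Equiv.sum_comp ea (fun j => -(μ j * t2 j))]
      refine Finset.sum_congr rfl fun i _ => ?_
      rw [hμa (ea i), Equiv.symm_apply_apply]
      ring
    have h2 := kyfan_aux (fun i => -lamAsc i) (fun x y hxy => neg_le_neg (hAsc hxy))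
      (fun i => t2 (ea i)) (fun i => ht2a _) (fun i => ht2b _) k hkle
      (by rw [Equiv.sum_comp ea t2, ht2c, hck])
    rw [← h1] at h2
    rw [Finset.sum_neg_distrib] at h2
    linarith
  -- combine everything
  have habs2 : ∑ i, |lam i| = 2 * (a - b) := by
    have hpt : ∀ i, |lam i| = 2 * max (lam i) 0 - lam i := by
      intro i
      rcases le_or_gt (lam i) 0 with h | h
      · rw [max_eq_right h, abs_of_nonpos h]; ring
      · rw [max_eq_left h.le, abs_of_pos h]; ring
    rw [Finset.sum_congr rfl fun i _ => hpt i, Finset.sum_sub_distrib, hlamsum,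
      ← Finset.mul_sum, hab]
    ring
  have hsum_eq : ∑ i, lamAsc i = ∑ i, lamDesc i := by
    rw [hea, hed]
    simp only [Function.comp_apply]
    rw [Equiv.sum_comp ea μ, Equiv.sum_comp ed μ]
  have hstep : a - b ≤ ∑ i, max (lamDesc i - lamAsc i) 0 := by
    have h1 : ∑ i ∈ Finset.univ.filter (fun i : Fin n => (i : ℕ) < k),
        (lamDesc i - lamAsc i)
        ≤ ∑ i ∈ Finset.univ.filter (fun i : Fin n => (i : ℕ) < k),
          max (lamDesc i - lamAsc i) 0 :=
      Finset.sum_le_sum fun i _ => le_max_left _ _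
    have h2 : ∑ i ∈ Finset.univ.filter (fun i : Fin n => (i : ℕ) < k),
        max (lamDesc i - lamAsc i) 0 ≤ ∑ i, max (lamDesc i - lamAsc i) 0 :=
      Finset.sum_le_sum_of_subset_of_nonneg (Finset.subset_univ _)
        (fun i _ _ => le_max_right _ _)
    have h3 : ∑ i ∈ Finset.univ.filter (fun i : Fin n => (i : ℕ) < k),
        (lamDesc i - lamAsc i)
        = (∑ i ∈ Finset.univ.filter (fun i : Fin n => (i : ℕ) < k), lamDesc i)
          - ∑ i ∈ Finset.univ.filter (fun i : Fin n => (i : ℕ) < k), lamAsc i :=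
      Finset.sum_sub_distrib _ _
    linarith
  have hfin : 2 * ∑ i, max (lamDesc i - lamAsc i) 0 = ∑ i, |lamAsc i - lamDesc i| := by
    have hpt : ∀ i, 2 * max (lamDesc i - lamAsc i) 0
        = |lamAsc i - lamDesc i| + (lamDesc i - lamAsc i) := by
      intro i
      rcases le_or_gt (lamDesc i - lamAsc i) 0 with h | h
      · rw [max_eq_right h, abs_of_nonneg (by linarith : 0 ≤ lamAsc i - lamDesc i)]
        ring
      · rw [max_eq_left h.le, abs_of_nonpos (by linarith : lamAsc i - lamDesc i ≤ 0)]
        ring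
    rw [Finset.mul_sum, Finset.sum_congr rfl fun i _ => hpt i, Finset.sum_add_distrib,
      Finset.sum_sub_distrib, ← hsum_eq, sub_self, add_zero]
  unfold traceDist
  have hgoal : ((Matrix.posSemidef_conjTranspose_mul_self (ρ - σ)).1.eigenvectorUnitary.1 *
      Matrix.diagonal ((fun x : ℝ => (x : ℂ)) ∘ (√·) ∘ (Matrix.posSemidef_conjTranspose_mul_self (ρ - σ)).1.eigenvalues) *
      (star (Matrix.posSemidef_conjTranspose_mul_self (ρ - σ)).1.eigenvectorUnitary :
        Matrix (Fin n) (Fin n) ℂ)).trace.re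
      = ∑ i, |lam i| := htrS
  rw [hgoal]
  linarith
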